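/- Let Q(f) be a family of Hermitian positive semidefinite M×M matrices indexed by f in a measurable set ℬ, with measurable eigenvalues, rank r(f) ≤ r_Q(f) for a measurable bound r_Q, and total power P = ∫_ℬ tr Q(f) df. Then ∫_ℬ log det(I + Q(f)/N₀) df ≤ ∑_{m=1}^M B_m log(1 + P/(N₀ ∑_{i=1}^M B_i)), where B_m = μ({f ∈ ℬ : r_Q(f) ≥ m}). -/

import Mathlib

open Matrix Complex ComplexOrder MeasureTheory

lemma trace_eq_sum_eig {M : ℕ} {A : Matrix (Fin M) (Fin M) ℂ} (hA : A.IsHermitian) :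
    A.trace = ∑ i, (hA.eigenvalues i : ℂ) := by
  classical
  set U : Matrix (Fin M) (Fin M) ℂ :=
    (Matrix.IsHermitian.eigenvectorUnitary hA : Matrix (Fin M) (Fin M) ℂ) with hUdef
  have hU : U * star U = 1 :=
    Matrix.mem_unitaryGroup_iff.mp (Matrix.IsHermitian.eigenvectorUnitary hA).2
  nth_rewrite 1 [hA.spectral_theorem]
  rw [Unitary.conjStarAlgAut_apply, Matrix.trace_mul_cycle]
  rw [show star (↑(Matrix.IsHermitian.eigenvectorUnitary hA) : Matrix (Fin M) (Fin M) ℂ) * (↑(Matrix.IsHermitian.eigenvectorUnitary hA) : Matrix (Fin M) (Fin M) ℂ) = 1 from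
    Matrix.mem_unitaryGroup_iff'.mp (Matrix.IsHermitian.eigenvectorUnitary hA).2, Matrix.one_mul,
    Matrix.trace_diagonal]
  rfl

lemma det_one_add_smul {M : ℕ} {A : Matrix (Fin M) (Fin M) ℂ} (hA : A.IsHermitian) (c : ℝ) :
    (1 + (c : ℂ) • A).det = ((∏ i, (1 + c * hA.eigenvalues i) : ℝ) : ℂ) := by
  classical
  set U : Matrix (Fin M) (Fin M) ℂ :=
    (Matrix.IsHermitian.eigenvectorUnitary hA : Matrix (Fin M) (Fin M) ℂ) with hUdef
  have hU : U * star U = 1 :=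
    Matrix.mem_unitaryGroup_iff.mp (Matrix.IsHermitian.eigenvectorUnitary hA).2
  have h1 : U * ((1 : Matrix (Fin M) (Fin M) ℂ)
        + (c : ℂ) • Matrix.diagonal (RCLike.ofReal ∘ hA.eigenvalues)) * star U
      = 1 + (c : ℂ) • A := by
    rw [Matrix.mul_add, Matrix.add_mul, Matrix.mul_one, hU, Matrix.mul_smul, Matrix.smul_mul]
    exact congrArg (fun X => 1 + (c : ℂ) • X) hA.spectral_theorem.symm
  have h2 : (1 : Matrix (Fin M) (Fin M) ℂ)
        + (c : ℂ) • Matrix.diagonal (RCLike.ofReal ∘ hA.eigenvalues)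
      = Matrix.diagonal (fun i => 1 + (c : ℂ) * (hA.eigenvalues i : ℂ)) := by
    rw [← Matrix.diagonal_one, ← Matrix.diagonal_smul, ← Matrix.diagonal_add]
    congr 1
  rw [← h1, Matrix.det_mul_right_comm, hU, Matrix.one_mul, h2, Matrix.det_diagonal]
  push_cast
  rfl

lemma eig_zero_of_rank_zero {M : ℕ} {A : Matrix (Fin M) (Fin M) ℂ} (hA : A.IsHermitian)
    (h : A.rank = 0) (i : Fin M) : hA.eigenvalues i = 0 := by
  classical
  rw [hA.rank_eq_card_non_zero_eigs] at h
  by_contra hne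
  have : Fintype.card {i // hA.eigenvalues i ≠ 0} ≠ 0 := by
    have : Nonempty {i // hA.eigenvalues i ≠ 0} := ⟨⟨i, hne⟩⟩
    exact Fintype.card_ne_zero
  omega

lemma logdet_bound {M : ℕ} {N₀ : ℝ} (hN₀ : 0 < N₀) {A : Matrix (Fin M) (Fin M) ℂ}
    (hA : A.PosSemidef) {r : ℕ} (hr : A.rank ≤ r) {c : ℝ} (hc : 1 ≤ c) :
    Real.log (((1 + ((N₀⁻¹ : ℝ) : ℂ) • A).det).re)
      ≤ (r : ℝ) * (Real.log c + (1 - c) / c) + (A.trace).re / (N₀ * c) := by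
  classical
  have hc0 : (0 : ℝ) < c := lt_of_lt_of_le one_pos hc
  have hH := hA.1
  have hpos : ∀ i, (0 : ℝ) < 1 + N₀⁻¹ * hH.eigenvalues i := fun i => by
    have := hA.eigenvalues_nonneg i
    have : 0 ≤ N₀⁻¹ * hH.eigenvalues i := mul_nonneg (by positivity) this
    linarith
  have hdet : (((1 + ((N₀⁻¹ : ℝ) : ℂ) • A).det).re)
      = ∏ i, (1 + N₀⁻¹ * hH.eigenvalues i) := by
    rw [det_one_add_smul hH N₀⁻¹, Complex.ofReal_re]
  rw [hdet, Real.log_prod (fun i _ => (hpos i).ne')]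
  -- restrict to nonzero eigenvalues
  set s : Finset (Fin M) := Finset.univ.filter (fun i => hH.eigenvalues i ≠ 0) with hsdef
  have hsum_eq : ∑ i, Real.log (1 + N₀⁻¹ * hH.eigenvalues i)
      = ∑ i ∈ s, Real.log (1 + N₀⁻¹ * hH.eigenvalues i) := by
    refine (Finset.sum_filter_of_ne ?_).symm
    intro i _ hne
    by_contra h0
    simp [h0] at hne
  rw [hsum_eq]
  have hK : 0 ≤ Real.log c + (1 - c) / c := by
    have h1 := Real.log_le_sub_one_of_pos (inv_pos.mpr hc0)
    rw [Real.log_inv] at h1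
    have : (1 - c) / c = c⁻¹ - 1 := by field_simp
    linarith
  have hcard : (s.card : ℝ) ≤ r := by
    have : A.rank = s.card := by
      rw [hH.rank_eq_card_non_zero_eigs, Fintype.card_subtype]
    exact_mod_cast this ▸ hr
  have htr : (A.trace).re = ∑ i, hH.eigenvalues i := by
    rw [trace_eq_sum_eig hH, Complex.re_sum]
    simp
  have step : ∀ i ∈ s, Real.log (1 + N₀⁻¹ * hH.eigenvalues i)
      ≤ (Real.log c + (1 - c) / c) + hH.eigenvalues i / (N₀ * c) := by
    intro i _
    have hy : 0 < 1 + N₀⁻¹ * hH.eigenvalues i := hpos i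
    have := Real.log_le_sub_one_of_pos (div_pos hy hc0)
    rw [Real.log_div hy.ne' hc0.ne'] at this
    have heq : (1 + N₀⁻¹ * hH.eigenvalues i) / c - 1
        = (1 - c) / c + hH.eigenvalues i / (N₀ * c) := by
      field_simp
      ring
    linarith
  calc ∑ i ∈ s, Real.log (1 + N₀⁻¹ * hH.eigenvalues i)
      ≤ ∑ i ∈ s, ((Real.log c + (1 - c) / c) + hH.eigenvalues i / (N₀ * c)) :=
        Finset.sum_le_sum step
    _ = s.card * (Real.log c + (1 - c) / c) + (∑ i ∈ s, hH.eigenvalues i) / (N₀ * c) := by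
        rw [Finset.sum_add_distrib, Finset.sum_const, nsmul_eq_mul, ← Finset.sum_div]
    _ ≤ (r : ℝ) * (Real.log c + (1 - c) / c) + (A.trace).re / (N₀ * c) := by
        have h1 : (s.card : ℝ) * (Real.log c + (1 - c) / c)
            ≤ (r : ℝ) * (Real.log c + (1 - c) / c) := mul_le_mul_of_nonneg_right hcard hK
        have h2 : (∑ i ∈ s, hH.eigenvalues i) ≤ (A.trace).re := by
          rw [htr]
          exact Finset.sum_le_sum_of_subset_of_nonneg (Finset.filter_subset _ _)
            (fun i _ _ => hA.eigenvalues_nonneg i)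
        have hnc : (0:ℝ) < N₀ * c := by positivity
        have h3 : (∑ i ∈ s, hH.eigenvalues i) / (N₀ * c) ≤ (A.trace).re / (N₀ * c) := by
          gcongr
        exact add_le_add h1 h3

lemma layer_cake {M : ℕ} (ℬ : Set ℝ) (hℬ : MeasurableSet ℬ) (hℬfin : volume ℬ < ⊤)
    (rQ : ℝ → ℕ) (hrQ_meas : Measurable rQ) (hrQ_le : ∀ f, rQ f ≤ M) :
    ∫ f in ℬ, (rQ f : ℝ)
      = ∑ m ∈ Finset.Icc 1 M, (volume {f ∈ ℬ | m ≤ rQ f}).toReal := by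
  classical
  have hA : ∀ m : ℕ, MeasurableSet {x : ℝ | m ≤ rQ x} := fun m =>
    hrQ_meas measurableSet_Ici
  have hpt : ∀ f : ℝ, (rQ f : ℝ)
      = ∑ m ∈ Finset.Icc 1 M, Set.indicator {x : ℝ | m ≤ rQ x} (fun _ => (1:ℝ)) f := by
    intro f
    have : ∀ m, Set.indicator {x : ℝ | m ≤ rQ x} (fun _ => (1:ℝ)) f
        = if m ≤ rQ f then (1:ℝ) else 0 := fun m => by
      simp [Set.indicator_apply, Set.mem_setOf_eq]
    simp_rw [this, Finset.sum_boole]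
    have : (Finset.Icc 1 M).filter (fun m => m ≤ rQ f) = Finset.Icc 1 (rQ f) := by
      ext m
      simp only [Finset.mem_filter, Finset.mem_Icc]
      have := hrQ_le f
      omega
    rw [this, Nat.card_Icc]
    simp
  have hint : ∀ m : ℕ, IntegrableOn
      (Set.indicator {x : ℝ | m ≤ rQ x} (fun _ => (1:ℝ))) ℬ := fun m =>
    (integrableOn_const hℬfin.ne).indicator (hA m)
  calc ∫ f in ℬ, (rQ f : ℝ)
      = ∫ f in ℬ, ∑ m ∈ Finset.Icc 1 M,
          Set.indicator {x : ℝ | m ≤ rQ x} (fun _ => (1:ℝ)) f := by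
        exact integral_congr_ae (Filter.Eventually.of_forall fun f => hpt f)
    _ = ∑ m ∈ Finset.Icc 1 M, ∫ f in ℬ,
          Set.indicator {x : ℝ | m ≤ rQ x} (fun _ => (1:ℝ)) f :=
        integral_finset_sum _ (fun m _ => hint m)
    _ = ∑ m ∈ Finset.Icc 1 M, (volume {f ∈ ℬ | m ≤ rQ f}).toReal := by
        refine Finset.sum_congr rfl fun m _ => ?_
        rw [setIntegral_indicator (hA m), setIntegral_const, smul_eq_mul, mul_one]
        congr 1


/-- rate integral upper bound
    ∫_ℬ log det(I + Q(f)/N₀) df ≤ ∑_{m=1}^M B_m log(1 + P/(N₀ ∑ B_i)),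
    where B_m = μ{f ∈ ℬ : r_Q(f) ≥ m} and P = ∫_ℬ tr Q(f) df. -/
theorem stmt6 (M : ℕ) (N₀ : ℝ) (hN₀ : 0 < N₀)
    (ℬ : Set ℝ) (hℬ : MeasurableSet ℬ) (hℬfin : volume ℬ < ⊤)
    (Q : ℝ → Matrix (Fin M) (Fin M) ℂ) (hQ : ∀ f, (Q f).PosSemidef)
    (rQ : ℝ → ℕ) (hrQ_meas : Measurable rQ) (hrQ_le : ∀ f, rQ f ≤ M)
    (hrank : ∀ f ∈ ℬ, (Q f).rank ≤ rQ f)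
    (htr_int : IntegrableOn (fun f => ((Q f).trace).re) ℬ)
    (B : ℕ → ℝ) (hB : ∀ m, B m = (volume {f ∈ ℬ | m ≤ rQ f}).toReal)
    (P : ℝ) (hP : P = ∫ f in ℬ, ((Q f).trace).re) :
    (∫ f in ℬ, Real.log ((((1 : Matrix (Fin M) (Fin M) ℂ) + (N₀⁻¹ : ℂ) • Q f).det).re)) ≤
      ∑ m ∈ Finset.Icc 1 M, B m * Real.log (1 + P / (N₀ * ∑ i ∈ Finset.Icc 1 M, B i)) := by
  classical
  have hcast : ((N₀⁻¹ : ℝ) : ℂ) = (N₀⁻¹ : ℂ) := by push_cast; ring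
  set g : ℝ → ℝ := fun f =>
    Real.log ((((1 : Matrix (Fin M) (Fin M) ℂ) + (N₀⁻¹ : ℂ) • Q f).det).re) with hgdef
  set S : ℝ := ∑ i ∈ Finset.Icc 1 M, B i with hSdef
  set c : ℝ := 1 + P / (N₀ * S) with hcdef
  -- basic facts
  have htnn : ∀ f, 0 ≤ ((Q f).trace).re := by
    intro f
    rw [trace_eq_sum_eig (hQ f).1, Complex.re_sum]
    refine Finset.sum_nonneg fun i _ => ?_
    simpa using (hQ f).eigenvalues_nonneg i
  have hPnn : 0 ≤ P := by
    rw [hP]; exact setIntegral_nonneg hℬ fun f _ => htnn f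
  have hBnn : ∀ m, 0 ≤ B m := fun m => (hB m) ▸ ENNReal.toReal_nonneg
  have hSnn : 0 ≤ S := Finset.sum_nonneg fun i _ => hBnn i
  have hc1 : 1 ≤ c := le_add_of_nonneg_right (div_nonneg hPnn (by positivity))
  have hc0 : 0 < c := lt_of_lt_of_le one_pos hc1
  have hRHS : ∑ m ∈ Finset.Icc 1 M, B m * Real.log c = S * Real.log c := by
    rw [← Finset.sum_mul]
  rw [hRHS]
  by_cases hS0 : S = 0
  · -- degenerate case: rQ = 0 a.e. on ℬ, both sides vanish
    have hnull : volume {f ∈ ℬ | 1 ≤ rQ f} = 0 := by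
      rcases Nat.eq_zero_or_pos M with hM | hM
      · have : {f ∈ ℬ | 1 ≤ rQ f} = ∅ := by
          ext f; simp only [Set.mem_setOf_eq, Set.mem_empty_iff_false, iff_false, not_and]
          intro _; have := hrQ_le f; omega
        simp [this]
      · have hB1 : B 1 = 0 := by
          have h1mem : 1 ∈ Finset.Icc 1 M := by simp; omega
          exact (Finset.sum_eq_zero_iff_of_nonneg (fun i _ => hBnn i)).mp hS0 1 h1mem
        have hfin : volume {f ∈ ℬ | 1 ≤ rQ f} < ⊤ :=
          lt_of_le_of_lt (measure_mono (fun x hx => hx.1)) hℬfin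
        rw [hB 1] at hB1
        exact (ENNReal.toReal_eq_zero_iff _).mp hB1 |>.resolve_right hfin.ne
    have hae : ∀ᵐ f, f ∉ {f ∈ ℬ | 1 ≤ rQ f} :=
      (MeasureTheory.measure_eq_zero_iff_ae_notMem).mp hnull
    have hLHS : ∫ f in ℬ, g f = 0 := by
      rw [← MeasureTheory.integral_zero ℝ ℝ (μ := volume.restrict ℬ)]
      refine setIntegral_congr_ae hℬ ?_
      filter_upwards [hae] with f hf hfB
      have hr0 : rQ f = 0 := by
        by_contra h
        exact hf ⟨hfB, by omega⟩
      have hrank0 : (Q f).rank = 0 := le_antisymm (hr0 ▸ hrank f hfB) (Nat.zero_le _)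
      have heig : ∀ i, (hQ f).1.eigenvalues i = 0 := eig_zero_of_rank_zero (hQ f).1 hrank0
      simp only [hgdef, ← hcast, det_one_add_smul (hQ f).1 N₀⁻¹]
      rw [Complex.ofReal_re]
      have : ∏ i, (1 + N₀⁻¹ * (hQ f).1.eigenvalues i) = 1 := by
        refine Finset.prod_eq_one fun i _ => ?_
        rw [heig i]; ring
      rw [this, Real.log_one]
    rw [hLHS, hS0, zero_mul]
  · have hSpos : 0 < S := lt_of_le_of_ne hSnn (Ne.symm hS0)
    by_cases hInt : IntegrableOn g ℬ
    · set K : ℝ := Real.log c + (1 - c) / c with hKdef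
      set h : ℝ → ℝ := fun f => (rQ f : ℝ) * K + ((Q f).trace).re / (N₀ * c) with hhdef
      have hbound : ∀ f ∈ ℬ, g f ≤ h f := by
        intro f hf
        have := logdet_bound hN₀ (hQ f) (hrank f hf) hc1
        rw [hcast] at this
        exact this
      have hmeas_rQ : Measurable (fun f => (rQ f : ℝ)) :=
        Measurable.comp (fun s _ => trivial) hrQ_meas
      have hconst : IntegrableOn (fun _ : ℝ => (M : ℝ)) ℬ :=
        integrableOn_const hℬfin.ne
      have hint_rQ : IntegrableOn (fun f => (rQ f : ℝ)) ℬ := by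
        refine hconst.mono' hmeas_rQ.aestronglyMeasurable ?_
        refine Filter.Eventually.of_forall fun f => ?_
        rw [Real.norm_natCast]
        exact_mod_cast hrQ_le f
      have hint_h : IntegrableOn h ℬ :=
        (hint_rQ.mul_const K).add (htr_int.div_const (N₀ * c))
      have hmono := setIntegral_mono_on hInt hint_h hℬ hbound
      have hcomp : ∫ f in ℬ, h f = S * K + P / (N₀ * c) := by
        rw [hhdef]
        rw [integral_add (hint_rQ.mul_const K) (htr_int.div_const (N₀ * c)),
          integral_mul_const, integral_div, ← hP,
          layer_cake ℬ hℬ hℬfin rQ hrQ_meas hrQ_le]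
        congr 1
        rw [hSdef]
        congr 1
        exact Finset.sum_congr rfl fun m _ => (hB m).symm
      have halg : S * K + P / (N₀ * c) = S * Real.log c := by
        have hcP : N₀ * S * (c - 1) = P := by
          rw [hcdef]
          field_simp
          ring
        rw [hKdef]
        field_simp
        nlinarith [hcP]
      calc ∫ f in ℬ, g f ≤ ∫ f in ℬ, h f := hmono
        _ = S * Real.log c := by rw [hcomp, halg]
    · rw [integral_undef hInt]
      exact mul_nonneg hSnn (Real.log_nonneg hc1)
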